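/- arXiv:1507.08777 — 2 statements merged into one kernel-verified Lean document; each statement's English description precedes it below -/
import Mathlib

section
/- (Theorem 1) Suppose 𝒱 is Lipschitz on [0,T] and let Z̃(t) = Z₀ + ∫₀ᵗ 𝒱(σ)dσ. Then there exists a constant C > 0 (depending only on T, the Lipschitz constant of 𝒱, ℏ and m) such that for every ε ∈ (0,1], every j ∈ {1,2,3,4} and every integer n ≥ 0 with nε ≤ T, ‖Z^j_ε(nε) − Z̃(nε)‖ ≤ C·√ε. In particular each process Z^j_ε converges to the classical trajectory Z̃ as ε → 0⁺. -/
noncomputable section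

open Complex Finset

/-- The four vertices of the unit square, viewed in `ℂ²`. -/
def uC : Fin 4 → EuclideanSpace ℂ (Fin 2) :=
  ![(WithLp.equiv 2 (Fin 2 → ℂ)).symm ![1, 1],
    (WithLp.equiv 2 (Fin 2 → ℂ)).symm ![1, -1],
    (WithLp.equiv 2 (Fin 2 → ℂ)).symm ![-1, -1],
    (WithLp.equiv 2 (Fin 2 → ℂ)).symm ![-1, 1]]

/-- `sIter n j` is `sⁿ u^j` for the cyclic permutation `s` with
`s u¹ = u², s u² = u³, s u³ = u⁴, s u⁴ = u¹`. -/
def sIter (n : ℕ) (j : Fin 4) : EuclideanSpace ℂ (Fin 2) := uC (j + (Fin.ofNat 4 n : Fin 4))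

lemma norm_uC_le (j : Fin 4) : ‖uC j‖ ≤ 2 := by
  fin_cases j <;>
  · rw [show (2:ℝ) = Real.sqrt 4 by rw [show (4:ℝ) = 2^2 by norm_num, Real.sqrt_sq]; norm_num]
    simp [uC, EuclideanSpace.norm_eq, Fin.sum_univ_two, WithLp.equiv_symm_apply]
    norm_num

lemma norm_sIter_le (n : ℕ) (j : Fin 4) : ‖sIter n j‖ ≤ 2 := norm_uC_le _

set_option maxHeartbeats 1000000

/-- Theorem 1: if `𝒱` is Lipschitz on `[0,T]` and
`Z̃(t) = Z₀ + ∫₀ᵗ 𝒱(σ) dσ`, then there is `C > 0` such that for every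
`ε ∈ (0,1]`, every `j` and every `n` with `nε ≤ T`,
`‖Z^j_ε(nε) − Z̃(nε)‖ ≤ C √ε`; so each process converges to the classical
trajectory as `ε → 0⁺`. Here `Z ε j n` denotes `Z^j_ε(nε)` for the family of
processes indexed by the time step `ε`. -/
theorem process_converges_to_classical_trajectory
    (ℏ m : ℝ) (hℏ : 0 < ℏ) (hm : 0 < m)
    (T K : ℝ) (hT : 0 < T) (hK : 0 ≤ K)
    (𝒱 : ℝ → EuclideanSpace ℂ (Fin 2)) (h𝒱 : Continuous 𝒱)
    (hLip : ∀ s ∈ Set.Icc (0 : ℝ) T, ∀ t ∈ Set.Icc (0 : ℝ) T,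
      ‖𝒱 s - 𝒱 t‖ ≤ K * |s - t|)
    (Z₀ : EuclideanSpace ℂ (Fin 2))
    (Z : ℝ → Fin 4 → ℕ → EuclideanSpace ℂ (Fin 2))
    (hZ0 : ∀ ε ∈ Set.Ioc (0 : ℝ) 1, ∀ j, Z ε j 0 = Z₀)
    (hZ : ∀ ε ∈ Set.Ioc (0 : ℝ) 1, ∀ j n, Z ε j (n + 1) = Z ε j n
      + ε • 𝒱 (((4 * ((n + 1) / 4) : ℕ) : ℝ) * ε)
      + ((1 + I) * (Real.sqrt (ℏ * ε / (4 * m)) : ℂ)) • (sIter (n + 1) j - sIter n j))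
    (Zc : ℝ → EuclideanSpace ℂ (Fin 2))
    (hZc : ∀ t, Zc t = Z₀ + ∫ σ in (0 : ℝ)..t, 𝒱 σ) :
    ∃ C > 0, ∀ ε ∈ Set.Ioc (0 : ℝ) 1, ∀ (j : Fin 4) (n : ℕ),
      (n : ℝ) * ε ≤ T →
      ‖Z ε j n - Zc ((n : ℝ) * ε)‖ ≤ C * Real.sqrt ε := by
  refine ⟨3 * K * T + 8 * Real.sqrt (ℏ / (4 * m)) + 1, by positivity, ?_⟩
  rintro ε hε j n hnT
  obtain ⟨hε0, hε1⟩ := hε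
  set γc : ℂ := (1 + I) * (Real.sqrt (ℏ * ε / (4 * m)) : ℂ) with hγc
  set c : ℕ → ℝ := fun k => ((4 * ((k + 1) / 4) : ℕ) : ℝ) * ε with hc
  -- closed form
  have key : ∀ N : ℕ, Z ε j N = Z₀ + (∑ k ∈ range N, ε • 𝒱 (c k))
      + γc • (sIter N j - sIter 0 j) := by
    intro N
    induction N with
    | zero => simp [hZ0 ε ⟨hε0, hε1⟩ j]
    | succ n ih =>
      rw [hZ ε ⟨hε0, hε1⟩ j n, ih, Finset.sum_range_succ]
      rw [show (((4 * ((n + 1) / 4) : ℕ) : ℝ) * ε) = c n from rfl]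
      module
  -- integral decomposition
  have hint : ∀ a b : ℝ, IntervalIntegrable 𝒱 MeasureTheory.volume a b :=
    fun a b => h𝒱.intervalIntegrable a b
  have hsplit : (∫ σ in (0:ℝ)..((n : ℝ) * ε), 𝒱 σ)
      = ∑ k ∈ range n, ∫ σ in ((k : ℝ) * ε)..(((k : ℝ) + 1) * ε), 𝒱 σ := by
    have h := intervalIntegral.sum_integral_adjacent_intervals
      (a := fun k : ℕ => (k : ℝ) * ε) (f := 𝒱) (n := n) (fun k _ => hint _ _)
    simp only [Nat.cast_zero, zero_mul] at h
    rw [← h]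
    refine Finset.sum_congr rfl fun k _ => ?_
    congr 1
    push_cast; ring
  have hdiff : Z ε j n - Zc ((n : ℝ) * ε)
      = (∑ k ∈ range n, (ε • 𝒱 (c k) - ∫ σ in ((k : ℝ) * ε)..(((k : ℝ) + 1) * ε), 𝒱 σ))
        + γc • (sIter n j - sIter 0 j) := by
    rw [key n, hZc, hsplit, Finset.sum_sub_distrib]
    abel
  -- per-term bound
  have hterm : ∀ k ∈ range n,
      ‖ε • 𝒱 (c k) - ∫ σ in ((k : ℝ) * ε)..(((k : ℝ) + 1) * ε), 𝒱 σ‖ ≤ 3 * K * ε ^ 2 := by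
    intro k hk
    have hkn : (k : ℝ) + 1 ≤ n := by
      have := Finset.mem_range.mp hk
      exact_mod_cast Nat.succ_le_of_lt this
    have hq1 : ((4 * ((k + 1) / 4) : ℕ) : ℝ) ≤ (k : ℝ) + 1 := by
      have : 4 * ((k + 1) / 4) ≤ k + 1 := by omega
      exact_mod_cast this
    have hq2 : (k : ℝ) + 1 ≤ ((4 * ((k + 1) / 4) : ℕ) : ℝ) + 3 := by
      have : k + 1 ≤ 4 * ((k + 1) / 4) + 3 := by omega
      exact_mod_cast this
    have hck0 : 0 ≤ c k := by positivity
    have hckT : c k ≤ T := by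
      have : c k ≤ ((k : ℝ) + 1) * ε :=
        mul_le_mul_of_nonneg_right hq1 hε0.le
      calc c k ≤ ((k : ℝ) + 1) * ε := this
        _ ≤ (n : ℝ) * ε := mul_le_mul_of_nonneg_right hkn hε0.le
        _ ≤ T := hnT
    have hconst : ε • 𝒱 (c k)
        = ∫ _σ in ((k : ℝ) * ε)..(((k : ℝ) + 1) * ε), 𝒱 (c k) := by
      rw [intervalIntegral.integral_const]
      congr 1
      ring
    rw [hconst, ← intervalIntegral.integral_sub (intervalIntegrable_const) (hint _ _)]
    have hb : ((k : ℝ) * ε) ≤ ((k : ℝ) + 1) * ε := by nlinarith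
    have hbound : ∀ σ ∈ Set.uIoc ((k : ℝ) * ε) (((k : ℝ) + 1) * ε),
        ‖𝒱 (c k) - 𝒱 σ‖ ≤ 3 * K * ε := by
      intro σ hσ
      rw [Set.uIoc_of_le hb] at hσ
      obtain ⟨hσ1, hσ2⟩ := hσ
      have hσ0 : 0 ≤ σ := le_trans (by positivity) hσ1.le
      have hσT : σ ≤ T := by
        calc σ ≤ ((k : ℝ) + 1) * ε := hσ2
          _ ≤ (n : ℝ) * ε := mul_le_mul_of_nonneg_right hkn hε0.le
          _ ≤ T := hnT
      have h1 : ‖𝒱 (c k) - 𝒱 σ‖ ≤ K * |c k - σ| :=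
        hLip _ ⟨hck0, hckT⟩ _ ⟨hσ0, hσT⟩
      have h2 : |c k - σ| ≤ 3 * ε := by
        rw [abs_le]
        constructor
        · have : ((k : ℝ) - 2) * ε ≤ c k :=
            mul_le_mul_of_nonneg_right (by linarith) hε0.le
          nlinarith
        · have : c k ≤ ((k : ℝ) + 1) * ε :=
            mul_le_mul_of_nonneg_right hq1 hε0.le
          nlinarith
      calc ‖𝒱 (c k) - 𝒱 σ‖ ≤ K * |c k - σ| := h1
        _ ≤ K * (3 * ε) := by
            exact mul_le_mul_of_nonneg_left h2 hK
        _ = 3 * K * ε := by ring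
    calc ‖∫ σ in ((k : ℝ) * ε)..(((k : ℝ) + 1) * ε), (𝒱 (c k) - 𝒱 σ)‖
        ≤ 3 * K * ε * |(((k : ℝ) + 1) * ε) - ((k : ℝ) * ε)| :=
          intervalIntegral.norm_integral_le_of_norm_le_const hbound
      _ = 3 * K * ε ^ 2 := by
          rw [show (((k : ℝ) + 1) * ε) - ((k : ℝ) * ε) = ε by ring,
            abs_of_pos hε0]
          ring
  -- gamma term bound
  have hγnorm : ‖γc‖ ≤ 2 * Real.sqrt (ℏ / (4 * m)) * Real.sqrt ε := by
    rw [hγc, norm_mul]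
    have h1 : ‖(1 : ℂ) + I‖ ≤ 2 := by
      calc ‖(1 : ℂ) + I‖ ≤ ‖(1 : ℂ)‖ + ‖I‖ := norm_add_le _ _
        _ = 2 := by simp; norm_num
    have h2 : ‖((Real.sqrt (ℏ * ε / (4 * m))) : ℂ)‖
        = Real.sqrt (ℏ / (4 * m)) * Real.sqrt ε := by
      rw [Complex.norm_real, Real.norm_eq_abs, _root_.abs_of_nonneg (Real.sqrt_nonneg _),
        show ℏ * ε / (4 * m) = (ℏ / (4 * m)) * ε by ring,
        Real.sqrt_mul (by positivity)]
    rw [h2]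
    calc ‖(1:ℂ) + I‖ * (Real.sqrt (ℏ / (4 * m)) * Real.sqrt ε)
        ≤ 2 * (Real.sqrt (ℏ / (4 * m)) * Real.sqrt ε) :=
          mul_le_mul_of_nonneg_right h1 (by positivity)
      _ = 2 * Real.sqrt (ℏ / (4 * m)) * Real.sqrt ε := by ring
  have hγterm : ‖γc • (sIter n j - sIter 0 j)‖
      ≤ 8 * Real.sqrt (ℏ / (4 * m)) * Real.sqrt ε := by
    rw [norm_smul]
    have hv : ‖sIter n j - sIter 0 j‖ ≤ 4 := by
      calc ‖sIter n j - sIter 0 j‖ ≤ ‖sIter n j‖ + ‖sIter 0 j‖ := norm_sub_le _ _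
        _ ≤ 2 + 2 := add_le_add (norm_sIter_le _ _) (norm_sIter_le _ _)
        _ = 4 := by norm_num
    have h0 : (0:ℝ) ≤ 2 * Real.sqrt (ℏ / (4 * m)) * Real.sqrt ε := by positivity
    calc ‖γc‖ * ‖sIter n j - sIter 0 j‖
        ≤ (2 * Real.sqrt (ℏ / (4 * m)) * Real.sqrt ε) * 4 := by
          exact mul_le_mul hγnorm hv (norm_nonneg _) h0
      _ = 8 * Real.sqrt (ℏ / (4 * m)) * Real.sqrt ε := by ring
  -- combine
  have hεsqrt : ε ≤ Real.sqrt ε := by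
    nlinarith [Real.sq_sqrt hε0.le, Real.sqrt_nonneg ε, Real.sqrt_le_one.mpr hε1]
  have hsum : ‖∑ k ∈ range n, (ε • 𝒱 (c k)
      - ∫ σ in ((k : ℝ) * ε)..(((k : ℝ) + 1) * ε), 𝒱 σ)‖ ≤ 3 * K * T * Real.sqrt ε := by
    calc ‖∑ k ∈ range n, (ε • 𝒱 (c k)
          - ∫ σ in ((k : ℝ) * ε)..(((k : ℝ) + 1) * ε), 𝒱 σ)‖
        ≤ ∑ k ∈ range n, ‖ε • 𝒱 (c k)
          - ∫ σ in ((k : ℝ) * ε)..(((k : ℝ) + 1) * ε), 𝒱 σ‖ := norm_sum_le _ _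
      _ ≤ ∑ _k ∈ range n, 3 * K * ε ^ 2 := Finset.sum_le_sum hterm
      _ = (n : ℝ) * (3 * K * ε ^ 2) := by
          rw [Finset.sum_const, Finset.card_range, nsmul_eq_mul]
      _ ≤ 3 * K * T * Real.sqrt ε := by
          have h1 : (n : ℝ) * (3 * K * ε ^ 2) = 3 * K * ((n : ℝ) * ε) * ε := by ring
          rw [h1]
          have h2 : 3 * K * ((n : ℝ) * ε) * ε ≤ 3 * K * T * ε := by
            apply mul_le_mul_of_nonneg_right _ hε0.le
            apply mul_le_mul_of_nonneg_left hnT (by positivity)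
          calc 3 * K * ((n : ℝ) * ε) * ε ≤ 3 * K * T * ε := h2
            _ ≤ 3 * K * T * Real.sqrt ε := by
                apply mul_le_mul_of_nonneg_left hεsqrt (by positivity)
  calc ‖Z ε j n - Zc ((n : ℝ) * ε)‖
      ≤ 3 * K * T * Real.sqrt ε + 8 * Real.sqrt (ℏ / (4 * m)) * Real.sqrt ε := by
        rw [hdiff]
        exact le_trans (norm_add_le _ _) (add_le_add hsum hγterm)
    _ ≤ (3 * K * T + 8 * Real.sqrt (ℏ / (4 * m)) + 1) * Real.sqrt ε := by
        have := Real.sqrt_nonneg ε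
        nlinarith
end
end

section
/- (Sufficient condition for a complex minimum) Let f be holomorphic on ℂⁿ and write P(X,Y) = Re f(X+iY). Assume f is convex in the complex sense, i.e. X ↦ P(X,Y) is convex for every Y ∈ ℝⁿ and Y ↦ P(X,Y) is concave for every X ∈ ℝⁿ. If Z₀ = X₀+iY₀ satisfies ∂f/∂z_k(Z₀) = 0 for all k, then Z₀ is a complex minimum of f: P(X₀,Y) ≤ P(X₀,Y₀) ≤ P(X,Y₀) for all X, Y ∈ ℝⁿ. -/
noncomputable section

open Complex Finset

/-- Combine real and imaginary parts `X, Y ∈ ℝⁿ` into `Z = X + iY ∈ ℂⁿ`. -/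
def toCpx {n : ℕ} (X Y : Fin n → ℝ) : Fin n → ℂ := fun k => (X k : ℂ) + (Y k : ℂ) * I

/-- A convex function on the whole space with vanishing derivative at a point
attains its global minimum there. -/
lemma convexOn_min_of_fderiv_zero {E : Type*} [NormedAddCommGroup E] [NormedSpace ℝ E]
    {g : E → ℝ} (hg : ConvexOn ℝ Set.univ g) {x₀ : E}
    (hd : HasFDerivAt g (0 : E →L[ℝ] ℝ) x₀) (x : E) : g x₀ ≤ g x := by
  set φ : ℝ → ℝ := fun t => g (x₀ + t • (x - x₀)) with hφdef
  have hφconv : ConvexOn ℝ Set.univ φ := by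
    have := hg.comp_affineMap (AffineMap.lineMap x₀ x : ℝ →ᵃ[ℝ] E)
    simp only [Set.preimage_univ] at this
    rw [show φ = g ∘ ⇑(AffineMap.lineMap x₀ x : ℝ →ᵃ[ℝ] E) from ?_]; exact this
    funext t
    simp only [φ, Function.comp, AffineMap.lineMap_apply_module]
    congr 1
    module
  have hline : HasDerivAt (fun t : ℝ => x₀ + t • (x - x₀)) (x - x₀) 0 := by
    simpa using ((hasDerivAt_id (0:ℝ)).smul_const (x - x₀)).const_add x₀
  have hd' : HasFDerivAt g (0 : E →L[ℝ] ℝ) (x₀ + (0:ℝ) • (x - x₀)) := by simpa using hd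
  have hφ' : HasDerivAt φ 0 0 := by
    have h := hd'.comp_hasDerivAt 0 hline; simp at h; exact h
  have := hφconv.le_slope_of_hasDerivAt (Set.mem_univ 0) (Set.mem_univ 1) one_pos hφ'
  rw [slope_def_field] at this
  have h0 : φ 0 = g x₀ := by simp [φ]
  have h1 : φ 1 = g x := by simp [φ]
  simp [h0, h1, div_one] at this
  linarith

/-- sufficient condition for a complex minimum: if `f` is
holomorphic on `ℂⁿ`, convex in the complex sense (i.e. `X ↦ P(X,Y)` is convex
and `Y ↦ P(X,Y)` is concave, where `P(X,Y) = Re f(X+iY)`), and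
`∂f/∂z_k (Z₀) = 0` for all `k`, then `Z₀ = X₀ + iY₀` is a complex minimum:
`P(X₀,Y) ≤ P(X₀,Y₀) ≤ P(X,Y₀)` for all `X, Y ∈ ℝⁿ`. -/
theorem complex_minimum_sufficient_condition
    (n : ℕ) (f : (Fin n → ℂ) → ℂ) (hf : Differentiable ℂ f)
    (hconv : ∀ Y : Fin n → ℝ,
      ConvexOn ℝ Set.univ (fun X : Fin n → ℝ => (f (toCpx X Y)).re))
    (hconc : ∀ X : Fin n → ℝ,
      ConcaveOn ℝ Set.univ (fun Y : Fin n → ℝ => (f (toCpx X Y)).re))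
    (X₀ Y₀ : Fin n → ℝ)
    (hcrit : ∀ k : Fin n, fderiv ℂ f (toCpx X₀ Y₀) (Pi.single k 1) = 0) :
    ∀ X Y : Fin n → ℝ,
      (f (toCpx X₀ Y)).re ≤ (f (toCpx X₀ Y₀)).re
        ∧ (f (toCpx X₀ Y₀)).re ≤ (f (toCpx X Y₀)).re := by
  set Z₀ := toCpx X₀ Y₀ with hZ₀
  -- the full complex derivative vanishes
  have hD : ∀ w : Fin n → ℂ, fderiv ℂ f Z₀ w = 0 := by
    intro w
    have hw : w = ∑ k, w k • (Pi.single k 1 : Fin n → ℂ) := by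
      funext j
      simp [Pi.single_apply]
    rw [hw, map_sum]
    simp only [map_smul]
    simp [hcrit]
  have hf0 : HasFDerivAt f ((0 : (Fin n → ℂ) →L[ℂ] ℂ).restrictScalars ℝ) Z₀ := by
    have : fderiv ℂ f Z₀ = 0 := ContinuousLinearMap.ext hD
    exact (this ▸ (hf Z₀).hasFDerivAt).restrictScalars ℝ
  -- the two real-linear embedding maps
  set A : (Fin n → ℝ) →L[ℝ] (Fin n → ℂ) :=
    ContinuousLinearMap.pi (fun k => Complex.ofRealCLM.comp (ContinuousLinearMap.proj k)) with hA
  set B : (Fin n → ℝ) →L[ℝ] (Fin n → ℂ) :=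
    ContinuousLinearMap.pi (fun k => I • (Complex.ofRealCLM.comp (ContinuousLinearMap.proj k)))
    with hB
  intro X Y
  constructor
  · -- concave direction: apply aux lemma to the negation
    have hgconv : ConvexOn ℝ Set.univ (fun Y : Fin n → ℝ => -(f (toCpx X₀ Y)).re) :=
      (hconc X₀).neg
    have hBmap : HasFDerivAt (fun Y : Fin n → ℝ => toCpx X₀ Y) B Y₀ := by
      have : (fun Y : Fin n → ℝ => toCpx X₀ Y)
          = fun Y => (fun k => (X₀ k : ℂ)) + B Y := by
        funext Y k
        simp [toCpx, B, mul_comm]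
      rw [this]
      exact B.hasFDerivAt.const_add _
    have hcomp : HasFDerivAt (fun Y : Fin n → ℝ => -(f (toCpx X₀ Y)).re)
        (0 : (Fin n → ℝ) →L[ℝ] ℝ) Y₀ := by
      have h1 : HasFDerivAt (fun Y : Fin n → ℝ => f (toCpx X₀ Y))
          (((0 : (Fin n → ℂ) →L[ℂ] ℂ).restrictScalars ℝ).comp B) Y₀ :=
        hf0.comp Y₀ hBmap
      have h2 : HasFDerivAt (fun Y : Fin n → ℝ => (f (toCpx X₀ Y)).re)
          (Complex.reCLM.comp (((0 : (Fin n → ℂ) →L[ℂ] ℂ).restrictScalars ℝ).comp B)) Y₀ :=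
        Complex.reCLM.hasFDerivAt.comp Y₀ h1
      exact h2.neg.congr_fderiv (by ext v; simp)
    have := convexOn_min_of_fderiv_zero hgconv hcomp Y
    simpa using this
  · have hAmap : HasFDerivAt (fun X : Fin n → ℝ => toCpx X Y₀) A X₀ := by
      have : (fun X : Fin n → ℝ => toCpx X Y₀)
          = fun X => A X + (fun k => (Y₀ k : ℂ) * I) := by
        funext X k
        simp [toCpx, A]
      rw [this]
      exact A.hasFDerivAt.add_const _
    have hcomp : HasFDerivAt (fun X : Fin n → ℝ => (f (toCpx X Y₀)).re)
        (0 : (Fin n → ℝ) →L[ℝ] ℝ) X₀ := by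
      have h1 : HasFDerivAt (fun X : Fin n → ℝ => f (toCpx X Y₀))
          (((0 : (Fin n → ℂ) →L[ℂ] ℂ).restrictScalars ℝ).comp A) X₀ :=
        hf0.comp X₀ hAmap
      have h2 := Complex.reCLM.hasFDerivAt.comp X₀ h1
      exact h2.congr_fderiv (by ext v; simp)
    exact convexOn_min_of_fderiv_zero (hconv Y₀) hcomp X
end
end
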